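/- Let Γ be a finite connected bipartite graph with ordered bipartition (B|B'), G ≤ Aut(Γ), 1 ≠ N ⊴ G, and r ≥ 3 an integer, such that Γ is r-starlike relative to N and locally (G,4)-distance transitive, and suppose N acts regularly on B. Identify B with N via n ↦ v·n for a fixed base point v (so that N acts on points by right multiplication, v corresponds to the identity of N, and G = N·G_v with G_v acting on N by conjugation). Then there exist r subgroups M_1, …, M_r of N such that, identifying each block of the adjacency design D(Γ) with its set of incident points, the set of blocks is exactly the set of right cosets {M_i·n : 1 ≤ i ≤ r, n ∈ N}; N acts on the blocks by right multiplication and G_v acts on the blocks by conjugation; in particular G_v permutes the set {M_1, …, M_r}, and the N-orbits on blocks are the r sets of right cosets of the subgroups M_i. -/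

import Mathlib

open SimpleGraph

section Prelude

variable {V : Type*}

/-- `g` is an automorphism of the graph `Γ`. -/
def IsGraphAut (Γ : SimpleGraph V) (g : Equiv.Perm V) : Prop :=
  ∀ u v : V, Γ.Adj (g u) (g v) ↔ Γ.Adj u v

/-- `(B | Bᶜ)` is an (ordered) bipartition of `Γ`: every edge joins `B` and `Bᶜ`. -/
def IsBipartition (Γ : SimpleGraph V) (B : Set V) : Prop :=
  ∀ u v : V, Γ.Adj u v → (u ∈ B ↔ v ∉ B)

/-- The orbit of `x` under a subgroup `N` of permutations of `V`. -/
def POrbit (N : Subgroup (Equiv.Perm V)) (x : V) : Set V :=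
  {y | ∃ n ∈ N, n x = y}

/-- `Γ` is locally `(G,s)`-distance transitive: the diameter is at least `s` and for
every vertex `v` and every `1 ≤ i ≤ s` the stabiliser of `v` in `G` is transitive on
the set of vertices at distance `i` from `v`. -/
def LocallyDistTrans (Γ : SimpleGraph V) (G : Subgroup (Equiv.Perm V)) (s : ℕ) : Prop :=
  s ≤ Γ.diam ∧
    ∀ (v x y : V) (i : ℕ), 1 ≤ i → i ≤ s → Γ.dist v x = i → Γ.dist v y = i →
      ∃ g ∈ G, g v = v ∧ g x = y

/-- `Γ`, bipartite with ordered bipartition `(B | Bᶜ)`, is `r`-starlike relative to `N`: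
`N` leaves `B` invariant, is transitive on `B`, and has exactly `r` orbits on `Bᶜ`. -/
def IsStarlike (Γ : SimpleGraph V) (B : Set V) (N : Subgroup (Equiv.Perm V)) (r : ℕ) : Prop :=
  (∀ n ∈ N, ∀ v : V, n v ∈ B ↔ v ∈ B) ∧
    (∀ x ∈ B, ∀ y ∈ B, ∃ n ∈ N, n x = y) ∧
    {S : Set V | ∃ x ∈ Bᶜ, S = POrbit N x}.ncard = r

/-- `G` is transitive on the set `S` of (ordered) pairs. -/
def PairTrans (G : Subgroup (Equiv.Perm V)) (S : Set (V × V)) : Prop :=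
  ∀ p ∈ S, ∀ q ∈ S, ∃ g ∈ G, g p.1 = q.1 ∧ g p.2 = q.2

/-- The adjacency design of the bipartite graph `Γ` with ordered bipartition `(B | Bᶜ)`
(points `B`, blocks `Bᶜ`, incidence = adjacency) is `G`-pairwise transitive. -/
def AdjPT (Γ : SimpleGraph V) (B : Set V) (G : Subgroup (Equiv.Perm V)) : Prop :=
  (∀ g ∈ G, ∀ v : V, g v ∈ B ↔ v ∈ B) ∧
  PairTrans G {p | p.1 ∈ B ∧ p.2 ∈ Bᶜ ∧ Γ.Adj p.1 p.2} ∧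
  PairTrans G {p | p.1 ∈ B ∧ p.2 ∈ Bᶜ ∧ ¬ Γ.Adj p.1 p.2} ∧
  PairTrans G {p | p.1 ∈ B ∧ p.2 ∈ B ∧ p.1 ≠ p.2 ∧ ∃ b ∈ Bᶜ, Γ.Adj p.1 b ∧ Γ.Adj p.2 b} ∧
  PairTrans G {p | p.1 ∈ B ∧ p.2 ∈ B ∧ p.1 ≠ p.2 ∧ ¬ ∃ b ∈ Bᶜ, Γ.Adj p.1 b ∧ Γ.Adj p.2 b} ∧
  PairTrans G {p | p.1 ∈ Bᶜ ∧ p.2 ∈ Bᶜ ∧ p.1 ≠ p.2 ∧ ∃ x ∈ B, Γ.Adj x p.1 ∧ Γ.Adj x p.2} ∧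
  PairTrans G {p | p.1 ∈ Bᶜ ∧ p.2 ∈ Bᶜ ∧ p.1 ≠ p.2 ∧ ¬ ∃ x ∈ B, Γ.Adj x p.1 ∧ Γ.Adj x p.2}

/-- The adjacency design of `Γ` (points `B`, blocks `Bᶜ`) is `N`-nicely affine:
`N` acts as automorphisms preserving the biparts, transitively on points, and there is a
constant `μ` such that distinct blocks in different `N`-orbits have exactly `μ` common
points, while distinct blocks in the same `N`-orbit have no common point. -/
def AdjNA (Γ : SimpleGraph V) (B : Set V) (N : Subgroup (Equiv.Perm V)) : Prop :=
  (∀ n ∈ N, ∀ v : V, n v ∈ B ↔ v ∈ B) ∧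
  (∀ x ∈ B, ∀ y ∈ B, ∃ n ∈ N, n x = y) ∧
  ∃ μ : ℕ, ∀ b ∈ Bᶜ, ∀ b' ∈ Bᶜ, b ≠ b' →
    ((b' ∈ POrbit N b → ¬ ∃ x, Γ.Adj x b ∧ Γ.Adj x b') ∧
     (b' ∉ POrbit N b → {x | Γ.Adj x b ∧ Γ.Adj x b'}.ncard = μ))

/-- The adjacency design of `Γ` (points `B`, blocks `Bᶜ`) is affine: the blocks can be
partitioned into parallel classes, and there is a positive constant `μ` such that blocks
in distinct parallel classes have exactly `μ` common points. -/
def AdjAffine (Γ : SimpleGraph V) (B : Set V) : Prop :=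
  ∃ 𝓒 : Set (Set V), (∀ C ∈ 𝓒, C ⊆ Bᶜ) ∧ (∀ b ∈ Bᶜ, ∃! C, C ∈ 𝓒 ∧ b ∈ C) ∧
    (∀ C ∈ 𝓒, ∀ x ∈ B, ∃! b, b ∈ C ∧ Γ.Adj x b) ∧
    ∃ μ : ℕ, 0 < μ ∧ ∀ C ∈ 𝓒, ∀ C' ∈ 𝓒, C ≠ C' → ∀ b ∈ C, ∀ b' ∈ C',
      {x | Γ.Adj x b ∧ Γ.Adj x b'}.ncard = μ

end Prelude

section DesignPrelude

variable {P L : Type*}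

/-- The design `(P, L, I)` is `G`-pairwise transitive. -/
def DesignPT (I : P → L → Prop) (G : Type*) [Group G] [MulAction G P] [MulAction G L] :
    Prop :=
  (∀ (x : P) (b : L) (x' : P) (b' : L), I x b → I x' b' →
      ∃ g : G, g • x = x' ∧ g • b = b') ∧
  (∀ (x : P) (b : L) (x' : P) (b' : L), ¬ I x b → ¬ I x' b' →
      ∃ g : G, g • x = x' ∧ g • b = b') ∧
  (∀ x y x' y' : P, x ≠ y → x' ≠ y' → (∃ b, I x b ∧ I y b) → (∃ b, I x' b ∧ I y' b) →
      ∃ g : G, g • x = x' ∧ g • y = y') ∧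
  (∀ x y x' y' : P, x ≠ y → x' ≠ y' → ¬ (∃ b, I x b ∧ I y b) → ¬ (∃ b, I x' b ∧ I y' b) →
      ∃ g : G, g • x = x' ∧ g • y = y') ∧
  (∀ b c b' c' : L, b ≠ c → b' ≠ c' → (∃ x, I x b ∧ I x c) → (∃ x, I x b' ∧ I x c') →
      ∃ g : G, g • b = b' ∧ g • c = c') ∧
  (∀ b c b' c' : L, b ≠ c → b' ≠ c' → ¬ (∃ x, I x b ∧ I x c) → ¬ (∃ x, I x b' ∧ I x c') →
      ∃ g : G, g • b = b' ∧ g • c = c')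

/-- The design `(P, L, I)` is `N`-nicely affine for the subgroup `N` of `G`. -/
def DesignNA (I : P → L → Prop) (G : Type*) [Group G] [MulAction G P] [MulAction G L]
    (N : Subgroup G) : Prop :=
  (∀ x y : P, ∃ n ∈ N, n • x = y) ∧
  ∃ μ : ℕ, ∀ b b' : L, b ≠ b' →
    (((∃ n ∈ N, n • b = b') → ¬ ∃ x, I x b ∧ I x b') ∧
     ((¬ ∃ n ∈ N, n • b = b') → {x | I x b ∧ I x b'}.ncard = μ))

/-- The incidence graph of the design `(P, L, I)`. -/
def DIncGraph (I : P → L → Prop) : SimpleGraph (P ⊕ L) :=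
  SimpleGraph.fromRel (fun a b => ∃ x s, a = Sum.inl x ∧ b = Sum.inr s ∧ I x s)

end DesignPrelude

section SetDesign

variable {V : Type*}

/-- Pairwise transitivity for a design whose points are the elements of `V`, whose
blocks are the members of `𝓑` (identified with their point-sets) and whose
incidence relation is membership; `G` is a group of permutations of `V`. -/
def SetPT (𝓑 : Set (Set V)) (G : Subgroup (Equiv.Perm V)) : Prop :=
  (∀ x : V, ∀ s ∈ 𝓑, ∀ x' : V, ∀ s' ∈ 𝓑, x ∈ s → x' ∈ s' →
      ∃ g ∈ G, g x = x' ∧ (fun z => g z) '' s = s') ∧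
  (∀ x : V, ∀ s ∈ 𝓑, ∀ x' : V, ∀ s' ∈ 𝓑, x ∉ s → x' ∉ s' →
      ∃ g ∈ G, g x = x' ∧ (fun z => g z) '' s = s') ∧
  (∀ x y x' y' : V, x ≠ y → x' ≠ y' → (∃ s ∈ 𝓑, x ∈ s ∧ y ∈ s) → (∃ s ∈ 𝓑, x' ∈ s ∧ y' ∈ s) →
      ∃ g ∈ G, g x = x' ∧ g y = y') ∧
  (∀ x y x' y' : V, x ≠ y → x' ≠ y' → ¬ (∃ s ∈ 𝓑, x ∈ s ∧ y ∈ s) → ¬ (∃ s ∈ 𝓑, x' ∈ s ∧ y' ∈ s) →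
      ∃ g ∈ G, g x = x' ∧ g y = y') ∧
  (∀ s ∈ 𝓑, ∀ t ∈ 𝓑, ∀ s' ∈ 𝓑, ∀ t' ∈ 𝓑, s ≠ t → s' ≠ t' →
      (s ∩ t).Nonempty → (s' ∩ t').Nonempty →
      ∃ g ∈ G, (fun z => g z) '' s = s' ∧ (fun z => g z) '' t = t') ∧
  (∀ s ∈ 𝓑, ∀ t ∈ 𝓑, ∀ s' ∈ 𝓑, ∀ t' ∈ 𝓑, s ≠ t → s' ≠ t' →
      s ∩ t = ∅ → s' ∩ t' = ∅ →
      ∃ g ∈ G, (fun z => g z) '' s = s' ∧ (fun z => g z) '' t = t')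

/-- Nice affineness for a design with point set `V`, blocks `𝓑` (point-sets) and
incidence given by membership, relative to a permutation group `N`. -/
def SetNA (𝓑 : Set (Set V)) (N : Subgroup (Equiv.Perm V)) : Prop :=
  (∀ x y : V, ∃ n ∈ N, n x = y) ∧
  (∀ n ∈ N, ∀ s ∈ 𝓑, (fun z => n z) '' s ∈ 𝓑) ∧
  ∃ μ : ℕ, ∀ s ∈ 𝓑, ∀ s' ∈ 𝓑, s ≠ s' →
    (((∃ n ∈ N, (fun z => n z) '' s = s') → s ∩ s' = ∅) ∧
     ((¬ ∃ n ∈ N, (fun z => n z) '' s = s') → (s ∩ s').ncard = μ))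

end SetDesign

section QuotientGraph

variable {V : Type*}

/-- The setoid on vertices whose classes are the `N`-orbits. -/
def orbitSetoid (N : Subgroup (Equiv.Perm V)) : Setoid V where
  r x y := ∃ n ∈ N, n x = y
  iseqv := by
    refine ⟨fun x => ⟨1, N.one_mem, rfl⟩, ?_, ?_⟩
    · rintro x y ⟨n, hn, rfl⟩
      exact ⟨n⁻¹, N.inv_mem hn, by simp⟩
    · rintro x y z ⟨n, hn, rfl⟩ ⟨m, hm, rfl⟩
      exact ⟨m * n, N.mul_mem hm hn, rfl⟩

/-- The normal quotient graph `Γ_N`: vertices are the `N`-orbits, two distinct orbits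
being adjacent iff some vertex of one is adjacent to some vertex of the other. -/
def quotGraph (Γ : SimpleGraph V) (N : Subgroup (Equiv.Perm V)) :
    SimpleGraph (Quotient (orbitSetoid N)) :=
  SimpleGraph.fromRel (fun a b => ∃ x y : V, Γ.Adj x y ∧
    Quotient.mk (orbitSetoid N) x = a ∧ Quotient.mk (orbitSetoid N) y = b)

end QuotientGraph

section Subdivision

variable {W : Type*}

/-- The subdivision graph `S(Σ)` of a graph `Σ`: vertices are `EΣ ⊕ VΣ`, an edge
being adjacent to its endpoints. -/
def SubdivisionGraph (Sg : SimpleGraph W) : SimpleGraph (↥Sg.edgeSet ⊕ W) :=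
  SimpleGraph.fromRel (fun a b => ∃ (e : Sg.edgeSet) (w : W),
    a = Sum.inl e ∧ b = Sum.inr w ∧ w ∈ (e : Sym2 W))

/-- The graph on `B'` in which two vertices are adjacent iff they are at distance `2`
in `Γ`. -/
def distTwoGraph (Γ : SimpleGraph W) (B' : Set W) : SimpleGraph ↥B' where
  Adj a b := Γ.dist ↑a ↑b = 2
  symm := by
    exact ⟨fun a b h => SimpleGraph.dist_comm.trans h⟩
  loopless := by
    constructor
    intro a h
    simp [SimpleGraph.dist_self] at h

/-- `f 0, f 1, …, f t` is a `t`-arc of `Sg`. -/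
def IsArcOf (Sg : SimpleGraph W) (t : ℕ) (f : ℕ → W) : Prop :=
  (∀ i : ℕ, i < t → Sg.Adj (f i) (f (i + 1))) ∧
  (∀ i : ℕ, 1 ≤ i → i + 1 ≤ t → f (i - 1) ≠ f (i + 1))

end Subdivision

section Aux17

variable {V : Type*}

lemma st17_porbit_self (N : Subgroup (Equiv.Perm V)) (x : V) : x ∈ POrbit N x :=
  ⟨1, N.one_mem, by simp⟩

lemma st17_porbit_eq {N : Subgroup (Equiv.Perm V)} {x y : V} (h : y ∈ POrbit N x) :
    POrbit N y = POrbit N x := by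
  obtain ⟨n, hn, rfl⟩ := h
  ext z
  constructor
  · rintro ⟨m, hm, rfl⟩
    exact ⟨m * n, N.mul_mem hm hn, by simp [Equiv.Perm.mul_apply]⟩
  · rintro ⟨m, hm, rfl⟩
    exact ⟨m * n⁻¹, N.mul_mem hm (N.inv_mem hn), by simp [Equiv.Perm.mul_apply]⟩

lemma st17_g_porbit {G N : Subgroup (Equiv.Perm V)}
    (hnorm : ∀ g ∈ G, ∀ n ∈ N, g * n * g⁻¹ ∈ N) {g : Equiv.Perm V} (hg : g ∈ G)
    {x y : V} (h : y ∈ POrbit N x) : g y ∈ POrbit N (g x) := by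
  obtain ⟨n, hn, rfl⟩ := h
  exact ⟨g * n * g⁻¹, hnorm g hg n hn, by simp [Equiv.Perm.mul_apply]⟩

lemma st17_nbr_image {Γ : SimpleGraph V} {g : Equiv.Perm V} (hg : IsGraphAut Γ g) (b : V) :
    Γ.neighborSet (g b) = (fun z => g z) '' Γ.neighborSet b := by
  ext w
  simp only [SimpleGraph.mem_neighborSet, Set.mem_image]
  constructor
  · intro h
    refine ⟨g⁻¹ w, ?_, by simp⟩
    have : Γ.Adj (g b) (g (g⁻¹ w)) := by simpa using h
    exact (hg b (g⁻¹ w)).mp this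
  · rintro ⟨z, hz, rfl⟩
    exact (hg b z).mpr hz

lemma st17_exists_nbr {Γ : SimpleGraph V} (hconn : Γ.Connected) {u w : V} (hne : u ≠ w) :
    ∃ x, Γ.Adj u x := by
  obtain ⟨p⟩ := hconn u w
  cases p with
  | nil => exact absurd rfl hne
  | cons h _ => exact ⟨_, h⟩

lemma st17_nbr_in_B {Γ : SimpleGraph V} {B : Set V} (hbip : IsBipartition Γ B)
    {b x : V} (hb : b ∉ B) (h : Γ.Adj x b) : x ∈ B := by
  have := hbip x b h
  tauto

lemma st17_not_adj {Γ : SimpleGraph V} {B : Set V} (hbip : IsBipartition Γ B)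
    {b c : V} (hb : b ∉ B) (hc : c ∉ B) : ¬ Γ.Adj b c := by
  intro h
  have := hbip b c h
  tauto

lemma st17_dist_two {Γ : SimpleGraph V} {B : Set V} (hconn : Γ.Connected)
    (hbip : IsBipartition Γ B) {b c x : V} (hne : b ≠ c) (hb : b ∉ B) (hc : c ∉ B)
    (hxb : Γ.Adj x b) (hxc : Γ.Adj x c) : Γ.dist b c = 2 := by
  have hle : Γ.dist b c ≤ 2 := by
    simpa using SimpleGraph.dist_le (SimpleGraph.Walk.cons hxb.symm (SimpleGraph.Walk.cons hxc .nil))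
  have h0 : 0 < Γ.dist b c := hconn.pos_dist_of_ne hne
  have h1 : Γ.dist b c ≠ 1 := by
    intro h
    exact st17_not_adj hbip hb hc (SimpleGraph.dist_eq_one_iff_adj.mp h)
  omega

lemma st17_walk_parity {Γ : SimpleGraph V} {B : Set V} (hbip : IsBipartition Γ B) :
    ∀ {u w : V} (p : Γ.Walk u w), w ∈ B ↔ (u ∈ B ↔ Even p.length) := by
  intro u w p
  induction p with
  | nil => simp
  | @cons a x w h p ih =>
    have hax := hbip a x h
    have hlen : (SimpleGraph.Walk.cons h p).length = p.length + 1 := by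
      simp [SimpleGraph.Walk.length_cons]
    rw [hlen]
    rw [Nat.even_add_one]
    by_cases hA : a ∈ B <;> by_cases hX : x ∈ B <;> by_cases hW : w ∈ B <;> tauto

lemma st17_walk_map {Γ : SimpleGraph V} {g : Equiv.Perm V} (hg : IsGraphAut Γ g) :
    ∀ {u w : V} (p : Γ.Walk u w), ∃ q : Γ.Walk (g u) (g w), q.length = p.length := by
  intro u w p
  induction p with
  | nil => exact ⟨.nil, rfl⟩
  | @cons a x w h p ih =>
    obtain ⟨q, hq⟩ := ih
    exact ⟨.cons ((hg a x).mpr h) q, by simp [SimpleGraph.Walk.length_cons, hq]⟩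

lemma st17_fix_B {Γ : SimpleGraph V} {B : Set V} (hconn : Γ.Connected)
    (hbip : IsBipartition Γ B) {g : Equiv.Perm V} (hg : IsGraphAut Γ g)
    {v : V} (hv : v ∈ B) (hgv : g v = v) : ∀ u, g u ∈ B ↔ u ∈ B := by
  intro u
  obtain ⟨p⟩ := hconn v u
  obtain ⟨q, hq⟩ := st17_walk_map hg p
  have h1 := st17_walk_parity hbip p
  have h2 := st17_walk_parity hbip q
  rw [hq, hgv] at h2
  tauto

end Aux17

section Aux17b

variable {V : Type*} [Fintype V] {Γ : SimpleGraph V} {B : Set V}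
  {G N : Subgroup (Equiv.Perm V)} {r : ℕ}

/-- Lemma A: two distinct blocks in the same `N`-orbit have no common neighbour. -/
lemma st17_disj (hconn : Γ.Connected) (hbip : IsBipartition Γ B)
    (hGaut : ∀ g ∈ G, IsGraphAut Γ g) (hNG : N ≤ G)
    (hnorm : ∀ g ∈ G, ∀ n ∈ N, g * n * g⁻¹ ∈ N)
    (hr : 2 ≤ r) (hstar : IsStarlike Γ B N r) (hldt : LocallyDistTrans Γ G 4)
    {v : V} (hv : v ∈ B)
    {b : V} (hb : b ∈ Bᶜ) {σ : Equiv.Perm V} (hσ : σ ∈ N) (hne : σ b ≠ b)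
    {x : V} (hx1 : Γ.Adj x b) (hx2 : Γ.Adj x (σ b)) : False := by
  have hBc : ∀ n ∈ N, ∀ u : V, u ∈ Bᶜ → n u ∈ Bᶜ := by
    intro n hn u hu h
    exact hu ((hstar.1 n hn u).mp h)
  have hσb : σ b ∈ Bᶜ := hBc σ hσ b hb
  have hxB : x ∈ B := st17_nbr_in_B hbip hb hx1
  -- another orbit
  have hother : ∃ c'' ∈ Bᶜ, POrbit N c'' ≠ POrbit N b := by
    by_contra hcon
    push_neg at hcon
    have hsub : {S : Set V | ∃ x ∈ Bᶜ, S = POrbit N x} ⊆ {POrbit N b} := by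
      rintro S ⟨y, hy, rfl⟩
      simp [hcon y hy]
    have := Set.ncard_le_ncard hsub (Set.finite_singleton _)
    rw [hstar.2.2, Set.ncard_singleton] at this
    omega
  obtain ⟨c'', hc'', horb⟩ := hother
  have hcv : c'' ≠ v := fun h => hc'' (h ▸ hv)
  obtain ⟨y, hy⟩ := st17_exists_nbr hconn hcv
  have hyB : y ∈ B := st17_nbr_in_B hbip hc'' hy.symm
  obtain ⟨n, hn, hny⟩ := hstar.2.1 y hyB x hxB
  set c := n c'' with hc
  have hcBc : c ∈ Bᶜ := hBc n hn c'' hc''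
  have hxc : Γ.Adj x c := by
    have := ((hGaut n (hNG hn)) y c'').mpr hy.symm
    rwa [hny] at this
  have hcorb : POrbit N c = POrbit N c'' :=
    st17_porbit_eq ⟨n, hn, rfl⟩
  have hcb : c ≠ b := by
    intro h
    rw [h] at hcorb
    exact horb hcorb.symm
  have d1 : Γ.dist b (σ b) = 2 :=
    st17_dist_two hconn hbip (Ne.symm hne) hb hσb hx1 hx2
  have d2 : Γ.dist b c = 2 :=
    st17_dist_two hconn hbip (Ne.symm hcb) hb hcBc hx1 hxc
  obtain ⟨g, hg, hgb, hgσb⟩ := hldt.2 b (σ b) c 2 (by omega) (by omega) d1 d2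
  have : c ∈ POrbit N b := by
    have h1 : σ b ∈ POrbit N b := ⟨σ, hσ, rfl⟩
    have h2 := st17_g_porbit hnorm hg h1
    rwa [hgb, hgσb] at h2
  exact horb (hcorb.symm.trans (st17_porbit_eq this))

/-- If `b ≠ b'` are blocks with the same neighbour set, then any block `c ≠ b`
sharing a neighbour with `b` satisfies `N(b) ⊆ N(c)`. -/
lemma st17_dup (hconn : Γ.Connected) (hbip : IsBipartition Γ B)
    (hGaut : ∀ g ∈ G, IsGraphAut Γ g) (hldt : LocallyDistTrans Γ G 4)
    {b b' c : V} (hb : b ∈ Bᶜ) (hb' : b' ∈ Bᶜ) (hc : c ∈ Bᶜ)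
    (hne : b ≠ b') (hsame : Γ.neighborSet b = Γ.neighborSet b')
    (hcb : c ≠ b) {x : V} (hx : Γ.Adj x b) (hxc : Γ.Adj x c) :
    Γ.neighborSet b ⊆ Γ.neighborSet c := by
  by_cases hcb' : c = b'
  · rw [hcb', ← hsame]
  have hxb' : Γ.Adj x b' := by
    have : x ∈ Γ.neighborSet b := hx.symm
    rw [hsame] at this
    exact this.symm
  have d1 : Γ.dist b c = 2 := st17_dist_two hconn hbip (Ne.symm hcb) hb hc hx hxc
  have d2 : Γ.dist b b' = 2 := st17_dist_two hconn hbip hne hb hb' hx hxb'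
  obtain ⟨g, hg, hgb, hgc⟩ := hldt.2 b c b' 2 (by omega) (by omega) d1 d2
  have hgaut := hGaut g hg
  have hginv : g⁻¹ b = b := by
    conv_lhs => rw [← hgb]
    exact Equiv.symm_apply_apply g b
  have hginvb' : g⁻¹ b' = c := by
    conv_lhs => rw [← hgc]
    exact Equiv.symm_apply_apply g c
  set T := Γ.neighborSet b ∩ Γ.neighborSet c with hT
  have himg : (fun z => g z) '' T = Γ.neighborSet b := by
    ext w
    constructor
    · rintro ⟨z, ⟨hz1, hz2⟩, rfl⟩
      have h1 : Γ.Adj (g b) (g z) := (hgaut b z).mpr hz1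
      rw [hgb] at h1
      exact h1
    · intro hw
      have hw' : w ∈ Γ.neighborSet b' := by rwa [← hsame]
      have hgauti := hGaut g⁻¹ (G.inv_mem hg)
      have h1 : Γ.Adj (g⁻¹ b) (g⁻¹ w) := (hgauti b w).mpr hw
      have h2 : Γ.Adj (g⁻¹ b') (g⁻¹ w) := (hgauti b' w).mpr hw'
      rw [hginv] at h1
      rw [hginvb'] at h2
      exact ⟨g⁻¹ w, ⟨h1, h2⟩, Equiv.apply_symm_apply g w⟩
  have hcard : (Γ.neighborSet b).ncard = T.ncard := by
    rw [← himg, Set.ncard_image_of_injective T g.injective]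
  have hTeq : T = Γ.neighborSet b :=
    Set.eq_of_subset_of_ncard_le Set.inter_subset_left (le_of_eq hcard)
  rw [← hTeq]
  exact Set.inter_subset_right

end Aux17b

section Aux17c

variable {V : Type*} [Fintype V] {Γ : SimpleGraph V} {B : Set V}
  {G N : Subgroup (Equiv.Perm V)} {r : ℕ}

lemma st17_adj_of_mem {Γ : SimpleGraph V} {a w : V} (h : w ∈ Γ.neighborSet a) :
    Γ.Adj a w := h

/-- No two distinct blocks through `v` can have the same neighbour set. -/
lemma st17_nodup (hconn : Γ.Connected) (hbip : IsBipartition Γ B)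
    (hGaut : ∀ g ∈ G, IsGraphAut Γ g) (hNG : N ≤ G)
    (hstar : IsStarlike Γ B N r) (hldt : LocallyDistTrans Γ G 4)
    {v : V} (hv : v ∈ B)
    {b b' : V} (hb : b ∈ Bᶜ) (hb' : b' ∈ Bᶜ) (hne : b ≠ b')
    (hvb : Γ.Adj v b) (hvb' : Γ.Adj v b')
    (hsame : Γ.neighborSet b = Γ.neighborSet b') : False := by
  set S := Γ.neighborSet b with hS
  have hvS : v ∈ S := hvb.symm
  -- Step 1: every block adjacent to v has neighbour set S.
  have step1 : ∀ c ∈ Bᶜ, Γ.Adj v c → Γ.neighborSet c = S := by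
    intro c hc hvc
    by_cases hcb : c = b
    · rw [hcb]
    have hSc : S ⊆ Γ.neighborSet c :=
      st17_dup hconn hbip hGaut hldt hb hb' hc hne hsame hcb hvb hvc
    -- transport the duplicate pair to c via local 1-distance transitivity at v
    have d1 : Γ.dist v b = 1 := SimpleGraph.dist_eq_one_iff_adj.mpr hvb
    have d2 : Γ.dist v c = 1 := SimpleGraph.dist_eq_one_iff_adj.mpr hvc
    obtain ⟨g, hg, hgv, hgb⟩ := hldt.2 v b c 1 (by omega) (by omega) d1 d2
    have hgaut := hGaut g hg
    have hfixB := st17_fix_B hconn hbip hgaut hv hgv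
    set c' := g b' with hc'
    have hc'Bc : c' ∈ Bᶜ := fun h => hb' ((hfixB b').mp h)
    have hcc' : c' ≠ c := by
      intro h
      rw [← hgb] at h
      exact hne (g.injective h).symm
    have hnbrc : Γ.neighborSet c = (fun z => g z) '' S := by
      rw [← hgb]; exact st17_nbr_image hgaut b
    have hnbrc' : Γ.neighborSet c' = (fun z => g z) '' S := by
      rw [hc', st17_nbr_image hgaut b', ← hsame]
    have hsame2 : Γ.neighborSet c = Γ.neighborSet c' := by rw [hnbrc, hnbrc']
    have hvc2 : Γ.Adj v c := hvc
    have hcSb : Γ.neighborSet c ⊆ Γ.neighborSet b :=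
      st17_dup hconn hbip hGaut hldt hc hc'Bc hb (Ne.symm hcc') hsame2
        (fun h => hcb h.symm) hvc hvb
    exact le_antisymm hcSb hSc
  -- Step 2: every block adjacent to a point of S has neighbour set S.
  have step2 : ∀ x ∈ S, ∀ c ∈ Bᶜ, Γ.Adj x c → Γ.neighborSet c = S := by
    intro x hxS c hc hxc
    have hxB : x ∈ B := st17_nbr_in_B hbip hb (st17_adj_of_mem hxS).symm
    obtain ⟨τ, hτ, hτx⟩ := hstar.2.1 x hxB v hv
    have hτaut := hGaut τ (hNG hτ)
    have hτc : Γ.Adj v (τ c) := by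
      have := (hτaut x c).mpr hxc
      rwa [hτx] at this
    have hτcBc : τ c ∈ Bᶜ := fun h => hc ((hstar.1 τ hτ c).mp h)
    have hτb : Γ.Adj v (τ b) := by
      have hadj : Γ.Adj x b := (st17_adj_of_mem hxS).symm
      have := (hτaut x b).mpr hadj
      rwa [hτx] at this
    have hτbBc : τ b ∈ Bᶜ := fun h => hb ((hstar.1 τ hτ b).mp h)
    have hτbS : Γ.neighborSet (τ b) = S := step1 (τ b) hτbBc hτb
    have hτS : (fun z => τ z) '' S = S := by
      conv_rhs => rw [← hτbS]
      rw [hS]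
      exact (st17_nbr_image hτaut b).symm
    have h1 : Γ.neighborSet (τ c) = S := step1 (τ c) hτcBc hτc
    have h2 : Γ.neighborSet (τ c) = (fun z => τ z) '' Γ.neighborSet c :=
      st17_nbr_image hτaut c
    have h3 : (fun z => τ z) '' Γ.neighborSet c = (fun z => τ z) '' S := by
      rw [← h2, h1, hτS]
    exact Set.image_injective.mpr τ.injective h3
  -- Step 3: propagate along walks.
  have step3 : ∀ (a u : V) (_ : Γ.Walk a u),
      ((a ∈ B ∧ a ∈ S) ∨ (a ∈ Bᶜ ∧ Γ.neighborSet a = S)) →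
      ((u ∈ B ∧ u ∈ S) ∨ (u ∈ Bᶜ ∧ Γ.neighborSet u = S)) := by
    intro a u p
    induction p with
    | nil => exact fun h => h
    | @cons a x u h p ih =>
      intro ha
      apply ih
      rcases ha with ⟨haB, haS⟩ | ⟨haB, haN⟩
      · have hxBc : x ∈ Bᶜ := by
          have := hbip a x h
          tauto
        exact Or.inr ⟨hxBc, step2 a haS x hxBc h⟩
      · have hxB : x ∈ B := by
          have := hbip a x h
          simp only [Set.mem_compl_iff] at haB
          tauto
        have hxS : x ∈ S := by rw [← haN]; exact h
        exact Or.inl ⟨hxB, hxS⟩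
  have step4 : ∀ u : V, (u ∈ B → u ∈ S) ∧ (u ∈ Bᶜ → Γ.neighborSet u = S) := by
    intro u
    obtain ⟨p⟩ := hconn v u
    have := step3 v u p (Or.inl ⟨hv, hvS⟩)
    constructor
    · intro huB
      rcases this with ⟨_, h⟩ | ⟨hc, _⟩
      · exact h
      · exact absurd huB hc
    · intro huB
      rcases this with ⟨hB, _⟩ | ⟨_, h⟩
      · exact absurd hB huB
      · exact h
  -- Step 5: diameter at most 2.
  have step5 : ∀ u w : V, Γ.dist u w ≤ 2 := by
    intro u w
    by_cases huB : u ∈ B <;> by_cases hwB : w ∈ B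
    · have huS : u ∈ S := (step4 u).1 huB
      have hwS : w ∈ S := (step4 w).1 hwB
      simpa using SimpleGraph.dist_le
        (SimpleGraph.Walk.cons (st17_adj_of_mem huS).symm
          (SimpleGraph.Walk.cons (st17_adj_of_mem hwS) .nil))
    · have hwn : Γ.neighborSet w = S := (step4 w).2 hwB
      have : u ∈ Γ.neighborSet w := by rw [hwn]; exact (step4 u).1 huB
      have h2 : Γ.dist u w ≤ 1 := by
        simpa using SimpleGraph.dist_le (SimpleGraph.Walk.cons (st17_adj_of_mem this).symm .nil)
      omega
    · have hun : Γ.neighborSet u = S := (step4 u).2 huB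
      have : w ∈ Γ.neighborSet u := by rw [hun]; exact (step4 w).1 hwB
      have h2 : Γ.dist u w ≤ 1 := by
        simpa using SimpleGraph.dist_le (SimpleGraph.Walk.cons (st17_adj_of_mem this) .nil)
      omega
    · have hun : Γ.neighborSet u = S := (step4 u).2 huB
      have hwn : Γ.neighborSet w = S := (step4 w).2 hwB
      have h1 : v ∈ Γ.neighborSet u := by rw [hun]; exact hvS
      have h2 : v ∈ Γ.neighborSet w := by rw [hwn]; exact hvS
      simpa using SimpleGraph.dist_le
        (SimpleGraph.Walk.cons (st17_adj_of_mem h1)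
          (SimpleGraph.Walk.cons (st17_adj_of_mem h2).symm .nil))
  -- contradiction with diameter ≥ 4
  have h4 : 4 ≤ Γ.diam := hldt.1
  haveI hnontriv : Nontrivial V := SimpleGraph.nontrivial_of_diam_ne_zero (G := Γ) (by omega)
  obtain ⟨u, w, huw⟩ := Γ.exists_dist_eq_diam
  have h2 := step5 u w
  rw [huw] at h2
  omega

end Aux17c

/-- **Lemma `lem:subgpsN`**.  Suppose `Γ` is `r`-starlike (`r ≥ 3`) relative to
`1 ≠ N ⊴ G ≤ Aut Γ`, locally `(G,4)`-distance transitive, and `N` is regular on `B`.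
Identify `B` with `N` via `n ↦ n v` for a base point `v ∈ B`.  Then there are `r`
subgroups `M₁, …, M_r` of `N` such that the blocks of `D(Γ)`, identified with their
point-sets, are exactly the cosets `{(n·m) v : m ∈ Mᵢ}`; `N` acts on the blocks by
multiplication and the stabiliser `G_v` acts on them by conjugation; in particular
`G_v` permutes `{M₁, …, M_r}`, and the `N`-orbits on blocks are the `r` families of
cosets of the `Mᵢ`.  (With Lean's left-action convention for permutations, the
paper's right cosets `Mᵢ·n` and right multiplication become left cosets `n·Mᵢ` and
left multiplication.) -/
theorem statement17 {V : Type*} [Fintype V] (Γ : SimpleGraph V) (B : Set V)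
    (hconn : Γ.Connected) (hbip : IsBipartition Γ B)
    (G N : Subgroup (Equiv.Perm V)) (hGaut : ∀ g ∈ G, IsGraphAut Γ g)
    (hNG : N ≤ G) (hN1 : N ≠ ⊥) (hnorm : ∀ g ∈ G, ∀ n ∈ N, g * n * g⁻¹ ∈ N)
    (r : ℕ) (hr : 3 ≤ r)
    (hstar : IsStarlike Γ B N r) (hldt : LocallyDistTrans Γ G 4)
    (hreg : ∀ x ∈ B, ∀ y ∈ B, ∃! n : Equiv.Perm V, n ∈ N ∧ n x = y)
    (v : V) (hv : v ∈ B) :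
    ∃ M : Fin r → Subgroup (Equiv.Perm V), Function.Injective M ∧ (∀ i, M i ≤ N) ∧
      -- every block is a coset of some Mᵢ …
      (∀ b ∈ Bᶜ, ∃ (i : Fin r), ∃ n ∈ N,
        Γ.neighborSet b =
          (fun m : Equiv.Perm V => (n * m) v) '' (M i : Set (Equiv.Perm V))) ∧
      -- … and every coset of every Mᵢ is a block
      (∀ i : Fin r, ∀ n ∈ N, ∃ b ∈ Bᶜ,
        Γ.neighborSet b =
          (fun m : Equiv.Perm V => (n * m) v) '' (M i : Set (Equiv.Perm V))) ∧
      -- N acts on the blocks by multiplication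
      (∀ σ ∈ N, ∀ b ∈ Bᶜ, ∀ i : Fin r, ∀ n ∈ N,
        Γ.neighborSet b =
            (fun m : Equiv.Perm V => (n * m) v) '' (M i : Set (Equiv.Perm V)) →
          Γ.neighborSet (σ b) =
            (fun m : Equiv.Perm V => ((σ * n) * m) v) '' (M i : Set (Equiv.Perm V))) ∧
      -- G_v permutes {M₁, …, M_r} and acts on the blocks by conjugation
      (∀ g ∈ G, g v = v → ∀ i : Fin r, ∃ j : Fin r,
        (fun m : Equiv.Perm V => g * m * g⁻¹) '' (M i : Set (Equiv.Perm V))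
          = (M j : Set (Equiv.Perm V))) ∧
      (∀ g ∈ G, g v = v → ∀ b ∈ Bᶜ, ∀ i : Fin r, ∀ n ∈ N,
        Γ.neighborSet b =
            (fun m : Equiv.Perm V => (n * m) v) '' (M i : Set (Equiv.Perm V)) →
          ∃ j : Fin r,
            (fun m : Equiv.Perm V => g * m * g⁻¹) '' (M i : Set (Equiv.Perm V))
              = (M j : Set (Equiv.Perm V)) ∧
            Γ.neighborSet (g b) =
              (fun m : Equiv.Perm V => ((g * n * g⁻¹) * m) v) ''
                (M j : Set (Equiv.Perm V))) ∧
      -- the N-orbits on the blocks are the r families of cosets of the Mᵢ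
      (∀ b ∈ Bᶜ, ∀ b' ∈ Bᶜ, ∀ i j : Fin r, ∀ n ∈ N, ∀ n' ∈ N,
        Γ.neighborSet b =
            (fun m : Equiv.Perm V => (n * m) v) '' (M i : Set (Equiv.Perm V)) →
        Γ.neighborSet b' =
            (fun m : Equiv.Perm V => (n' * m) v) '' (M j : Set (Equiv.Perm V)) →
          ((∃ σ ∈ N, σ b = b') ↔ i = j)) := by
  classical
  have hBc_mem : ∀ n ∈ N, ∀ u : V, u ∈ Bᶜ → n u ∈ Bᶜ := by
    intro n hn u hu h
    exact hu ((hstar.1 n hn u).mp h)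
  have hr2 : 2 ≤ r := by omega
  let 𝒪 : Set (Set V) := {S | ∃ x ∈ Bᶜ, S = POrbit N x}
  have hcard : 𝒪.ncard = r := hstar.2.2
  have hNatCard : Nat.card ↥𝒪 = r := by
    rw [Nat.card_coe_set_eq]; exact hcard
  have hpos : Nat.card ↥𝒪 ≠ 0 := by omega
  let e : ↥𝒪 ≃ Fin r := (Nat.equivFinOfCardPos hpos).trans (finCongr hNatCard)
  let O : Fin r → Set V := fun i => ((e.symm i : ↥𝒪) : Set V)
  have hOall : ∀ (c : V), c ∈ Bᶜ → ∃ i, O i = POrbit N c := by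
    intro c hc
    refine ⟨e ⟨POrbit N c, ⟨c, hc, rfl⟩⟩, ?_⟩
    exact congrArg Subtype.val (e.symm_apply_apply ⟨POrbit N c, ⟨c, hc, rfl⟩⟩)
  have hOinj : Function.Injective O := by
    intro i j h
    exact e.symm.injective (Subtype.coe_injective h)
  -- choose a block of each orbit adjacent to v
  have hrep : ∀ i : Fin r, ∃ b, b ∈ Bᶜ ∧ Γ.Adj v b ∧ POrbit N b = O i := by
    intro i
    obtain ⟨c, hc, hOc⟩ := (e.symm i).2
    have hcv : c ≠ v := fun h => hc (h ▸ hv)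
    obtain ⟨y, hy⟩ := st17_exists_nbr hconn hcv
    have hyB : y ∈ B := st17_nbr_in_B hbip hc hy.symm
    obtain ⟨n, hn, hny⟩ := hstar.2.1 y hyB v hv
    refine ⟨n c, hBc_mem n hn c hc, ?_, ?_⟩
    · have := (hGaut n (hNG hn) y c).mpr hy.symm
      rwa [hny] at this
    · rw [st17_porbit_eq ⟨n, hn, rfl⟩]
      exact hOc.symm
  choose bb hbbBc hbbAdj hbbOrb using hrep
  -- classification of blocks adjacent to v
  have hclass : ∀ c, c ∈ Bᶜ → Γ.Adj v c → ∀ i, POrbit N c = O i → c = bb i := by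
    intro c hc hvc i hOc
    by_contra hne
    have hmem : bb i ∈ POrbit N c := by
      rw [hOc, ← hbbOrb i]
      exact st17_porbit_self N (bb i)
    obtain ⟨σ, hσ, hσc⟩ := hmem
    have hσne : σ c ≠ c := by
      rw [hσc]; exact fun h => hne h.symm
    exact st17_disj hconn hbip hGaut hNG hnorm hr2 hstar hldt hv hc hσ hσne hvc
      (by rw [hσc]; exact hbbAdj i)
  -- the subgroups
  let M : Fin r → Subgroup (Equiv.Perm V) :=
    fun i => N ⊓ MulAction.stabilizer (Equiv.Perm V) (bb i)
  have hMN : ∀ i, M i ≤ N := fun i => inf_le_left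
  have hMmem : ∀ (i : Fin r) (m : Equiv.Perm V), m ∈ M i ↔ m ∈ N ∧ m (bb i) = bb i := by
    intro i m
    show m ∈ N ⊓ MulAction.stabilizer (Equiv.Perm V) (bb i) ↔ _
    simp [Subgroup.mem_inf, MulAction.mem_stabilizer_iff, Equiv.Perm.smul_def]
  have hMchar : ∀ (i : Fin r) (m : Equiv.Perm V),
      m ∈ M i ↔ m ∈ N ∧ Γ.Adj (m v) (bb i) := by
    intro i m
    rw [hMmem]
    constructor
    · rintro ⟨hmN, hfix⟩
      refine ⟨hmN, ?_⟩
      have := (hGaut m (hNG hmN) v (bb i)).mpr (hbbAdj i)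
      rwa [hfix] at this
    · rintro ⟨hmN, hadj⟩
      refine ⟨hmN, ?_⟩
      by_contra hne
      have hadj2 : Γ.Adj (m v) (m (bb i)) := (hGaut m (hNG hmN) v (bb i)).mpr (hbbAdj i)
      exact st17_disj hconn hbip hGaut hNG hnorm hr2 hstar hldt hv (hbbBc i) hmN hne hadj hadj2
  -- neighbour sets of the base blocks
  have hnbr : ∀ i, Γ.neighborSet (bb i)
      = (fun m : Equiv.Perm V => m v) '' (M i : Set (Equiv.Perm V)) := by
    intro i
    ext x
    simp only [SimpleGraph.mem_neighborSet, Set.mem_image, SetLike.mem_coe]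
    constructor
    · intro hx
      have hxB : x ∈ B := st17_nbr_in_B hbip (hbbBc i) hx.symm
      obtain ⟨n, hn, hnv⟩ := hstar.2.1 v hv x hxB
      exact ⟨n, (hMchar i n).mpr ⟨hn, by rw [hnv]; exact hx.symm⟩, hnv⟩
    · rintro ⟨m, hm, rfl⟩
      exact ((hMchar i m).mp hm).2.symm
  -- injectivity
  have hMinj : Function.Injective M := by
    intro i j hij
    by_contra hne
    have hbbne : bb i ≠ bb j := by
      intro h
      apply hne
      apply hOinj
      rw [← hbbOrb i, ← hbbOrb j, h]
    have hnn : Γ.neighborSet (bb i) = Γ.neighborSet (bb j) := by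
      rw [hnbr i, hnbr j, hij]
    exact st17_nodup hconn hbip hGaut hNG hstar hldt hv (hbbBc i) (hbbBc j) hbbne
      (hbbAdj i) (hbbAdj j) hnn
  -- distinct blocks have distinct neighbour sets
  have hinjb : ∀ c, c ∈ Bᶜ → ∀ c', c' ∈ Bᶜ →
      Γ.neighborSet c = Γ.neighborSet c' → c = c' := by
    intro c hc c' hc' hsame
    have hcv : c ≠ v := fun h => hc (h ▸ hv)
    obtain ⟨x, hx⟩ := st17_exists_nbr hconn hcv
    have hxB : x ∈ B := st17_nbr_in_B hbip hc hx.symm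
    obtain ⟨τ, hτ, hτx⟩ := hstar.2.1 x hxB v hv
    have hτaut := hGaut τ (hNG hτ)
    have h1 : Γ.Adj v (τ c) := by
      have := (hτaut x c).mpr hx.symm
      rwa [hτx] at this
    have hx' : Γ.Adj c' x := by
      have hmem : x ∈ Γ.neighborSet c := hx
      rw [hsame] at hmem
      exact st17_adj_of_mem hmem
    have h2 : Γ.Adj v (τ c') := by
      have := (hτaut x c').mpr hx'.symm
      rwa [hτx] at this
    have hτc : τ c ∈ Bᶜ := hBc_mem τ hτ c hc
    have hτc' : τ c' ∈ Bᶜ := hBc_mem τ hτ c' hc'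
    obtain ⟨k, hk⟩ := hOall (τ c) hτc
    obtain ⟨l, hl⟩ := hOall (τ c') hτc'
    have hck : τ c = bb k := hclass (τ c) hτc h1 k hk.symm
    have hcl : τ c' = bb l := hclass (τ c') hτc' h2 l hl.symm
    have hnbreq : Γ.neighborSet (bb k) = Γ.neighborSet (bb l) := by
      rw [← hck, ← hcl, st17_nbr_image hτaut c, st17_nbr_image hτaut c', hsame]
    have hMkl : M k = M l := by
      ext m
      rw [hMchar, hMchar]
      constructor
      · rintro ⟨hm, hadj⟩
        refine ⟨hm, ?_⟩
        have hmem : m v ∈ Γ.neighborSet (bb k) := hadj.symm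
        rw [hnbreq] at hmem
        exact st17_adj_of_mem hmem |>.symm
      · rintro ⟨hm, hadj⟩
        refine ⟨hm, ?_⟩
        have hmem : m v ∈ Γ.neighborSet (bb l) := hadj.symm
        rw [← hnbreq] at hmem
        exact st17_adj_of_mem hmem |>.symm
    have hkl : k = l := hMinj hMkl
    rw [hkl, ← hcl] at hck
    exact τ.injective hck
  -- image composition helper
  have himg : ∀ (g : Equiv.Perm V) (s : Set (Equiv.Perm V)),
      (fun z => g z) '' ((fun m : Equiv.Perm V => m v) '' s)
        = (fun m : Equiv.Perm V => (g * m) v) '' s := by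
    intro g s
    rw [Set.image_image]
    congr 1
  -- injectivity of the evaluation map on N
  have hNinj : ∀ a ∈ N, ∀ a' ∈ N, a v = a' v → a = a' := by
    intro a ha a' ha' hvv
    have haB : a v ∈ B := (hstar.1 a ha v).mpr hv
    obtain ⟨u, hu, huniq⟩ := hreg v hv (a v) haB
    have e1 := huniq a ⟨ha, rfl⟩
    have e2 := huniq a' ⟨ha', hvv.symm⟩
    rw [e1, e2]
  -- every block is a coset
  have hblock : ∀ c, c ∈ Bᶜ → ∃ i, ∃ n ∈ N,
      Γ.neighborSet c = (fun m : Equiv.Perm V => (n * m) v) '' (M i : Set (Equiv.Perm V)) := by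
    intro c hc
    obtain ⟨i, hi⟩ := hOall c hc
    have hmem : bb i ∈ POrbit N c := by
      rw [← hi, ← hbbOrb i]
      exact st17_porbit_self N (bb i)
    obtain ⟨σ, hσ, hσc⟩ := hmem
    have hc_eq : σ⁻¹ (bb i) = c := by
      rw [← hσc]; exact Equiv.symm_apply_apply σ c
    refine ⟨i, σ⁻¹, N.inv_mem hσ, ?_⟩
    rw [← hc_eq, st17_nbr_image (hGaut σ⁻¹ (G.inv_mem (hNG hσ))) (bb i), hnbr i, himg]
  -- translation action
  have hact : ∀ σ ∈ N, ∀ (b : V) (i : Fin r) (n : Equiv.Perm V),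
      Γ.neighborSet b = (fun m : Equiv.Perm V => (n * m) v) '' (M i : Set (Equiv.Perm V)) →
      Γ.neighborSet (σ b)
        = (fun m : Equiv.Perm V => ((σ * n) * m) v) '' (M i : Set (Equiv.Perm V)) := by
    intro σ hσ b i n hb
    rw [st17_nbr_image (hGaut σ (hNG hσ)) b, hb, Set.image_image]
    congr 1
  -- conjugation
  have hconj : ∀ g ∈ G, g v = v → ∀ i : Fin r, ∃ j : Fin r, g (bb i) = bb j ∧
      (fun m : Equiv.Perm V => g * m * g⁻¹) '' (M i : Set (Equiv.Perm V))
        = (M j : Set (Equiv.Perm V)) := by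
    intro g hg hgv i
    have hgaut := hGaut g hg
    have hfixB := st17_fix_B hconn hbip hgaut hv hgv
    have hgbBc : g (bb i) ∈ Bᶜ := fun h => (hbbBc i) ((hfixB (bb i)).mp h)
    have hgbAdj : Γ.Adj v (g (bb i)) := by
      have := (hgaut v (bb i)).mpr (hbbAdj i)
      rwa [hgv] at this
    obtain ⟨j, hj⟩ := hOall (g (bb i)) hgbBc
    have hgbj : g (bb i) = bb j := hclass _ hgbBc hgbAdj j hj.symm
    refine ⟨j, hgbj, ?_⟩
    ext x
    simp only [Set.mem_image, SetLike.mem_coe]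
    constructor
    · rintro ⟨m, hm, rfl⟩
      obtain ⟨hmN, hmfix⟩ := (hMmem i m).mp hm
      rw [hMmem]
      refine ⟨hnorm g hg m hmN, ?_⟩
      rw [← hgbj]
      simp [Equiv.Perm.mul_apply, hmfix]
    · intro hx
      obtain ⟨hxN, hxfix⟩ := (hMmem j x).mp hx
      refine ⟨g⁻¹ * x * g, ?_, ?_⟩
      · rw [hMmem]
        constructor
        · have := hnorm g⁻¹ (G.inv_mem hg) x hxN
          rwa [inv_inv] at this
        · show (g⁻¹ * x * g) (bb i) = bb i
          have : (g⁻¹ * x * g) (bb i) = g⁻¹ (x (g (bb i))) := by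
            simp [Equiv.Perm.mul_apply]
          rw [this, hgbj, hxfix, ← hgbj, Equiv.Perm.inv_def, Equiv.symm_apply_apply]
      · group
  -- assemble
  refine ⟨M, hMinj, hMN, ?_, ?_, ?_, ?_, ?_, ?_⟩
  · intro b hb
    exact hblock b hb
  · intro i n hn
    refine ⟨n (bb i), hBc_mem n hn _ (hbbBc i), ?_⟩
    rw [st17_nbr_image (hGaut n (hNG hn)) (bb i), hnbr i, himg]
  · intro σ hσ b _hb i n _hn hnbrb
    exact hact σ hσ b i n hnbrb
  · intro g hg hgv i
    obtain ⟨j, _, hj⟩ := hconj g hg hgv i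
    exact ⟨j, hj⟩
  · intro g hg hgv b _hb i n _hn hnbrb
    obtain ⟨j, hgbj, hj⟩ := hconj g hg hgv i
    refine ⟨j, hj, ?_⟩
    have hginvv : g⁻¹ v = v := g.injective (by rw [Equiv.Perm.inv_def, Equiv.apply_symm_apply, hgv])
    rw [st17_nbr_image (hGaut g hg) b, hnbrb, Set.image_image, ← hj, Set.image_image]
    congr 1
    funext m
    simp [Equiv.Perm.mul_apply, hginvv]
  · intro b hb b' hb' i j n hn n' hn' hnbrb hnbrb'
    constructor
    · rintro ⟨σ, hσ, hσb⟩
      have h1 : Γ.neighborSet b'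
          = (fun m : Equiv.Perm V => ((σ * n) * m) v) '' (M i : Set (Equiv.Perm V)) := by
        rw [← hσb]
        exact hact σ hσ b i n hnbrb
      have hforward : ∀ m ∈ M i, ∃ m' ∈ M j, n' * m' = (σ * n) * m := by
        intro m hm
        have hx : ((σ * n) * m) v ∈ Γ.neighborSet b' := by
          rw [h1]
          exact ⟨m, SetLike.mem_coe.mpr hm, rfl⟩
        rw [hnbrb', Set.mem_image] at hx
        obtain ⟨m', hm', hEq⟩ := hx
        exact ⟨m', SetLike.mem_coe.mp hm',
          hNinj (n' * m') (N.mul_mem hn' (hMN j (SetLike.mem_coe.mp hm')))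
            ((σ * n) * m) (N.mul_mem (N.mul_mem hσ hn) (hMN i hm)) hEq⟩
      have hback : ∀ m' ∈ M j, ∃ m ∈ M i, (σ * n) * m = n' * m' := by
        intro m' hm'
        have hx : (n' * m') v ∈ Γ.neighborSet b' := by
          rw [hnbrb']
          exact ⟨m', SetLike.mem_coe.mpr hm', rfl⟩
        rw [h1, Set.mem_image] at hx
        obtain ⟨m, hm, hEq⟩ := hx
        exact ⟨m, SetLike.mem_coe.mp hm,
          hNinj ((σ * n) * m) (N.mul_mem (N.mul_mem hσ hn) (hMN i (SetLike.mem_coe.mp hm)))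
            (n' * m') (N.mul_mem hn' (hMN j hm')) hEq⟩
      obtain ⟨t, ht, hteq⟩ := hforward 1 (M i).one_mem
      obtain ⟨s, hs, hseq⟩ := hback 1 (M j).one_mem
      rw [mul_one] at hteq
      rw [mul_one] at hseq
      have hMij : M i = M j := by
        ext a
        constructor
        · intro ha
          obtain ⟨a', ha', hEq⟩ := hforward a ha
          have ha'ta : a' = t * a := by
            have h2 : n' * a' = n' * (t * a) := by
              rw [hEq, ← mul_assoc, hteq]
            exact mul_left_cancel h2
          have : a = t⁻¹ * a' := by rw [ha'ta]; group
          rw [this]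
          exact (M j).mul_mem ((M j).inv_mem ht) ha'
        · intro ha
          obtain ⟨m, hm, hEq⟩ := hback a ha
          have hma : m = s * a := by
            have h2 : (σ * n) * m = (σ * n) * (s * a) := by
              rw [hEq, ← mul_assoc, hseq]
            exact mul_left_cancel h2
          have : a = s⁻¹ * m := by rw [hma]; group
          rw [this]
          exact (M i).mul_mem ((M i).inv_mem hs) hm
      exact hMinj hMij
    · intro hij
      subst hij
      refine ⟨n' * n⁻¹, N.mul_mem hn' (N.inv_mem hn), ?_⟩
      have h1 := hact (n' * n⁻¹) (N.mul_mem hn' (N.inv_mem hn)) b i n hnbrb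
      have h2 : ((n' * n⁻¹) * n) = n' := by group
      rw [h2] at h1
      apply hinjb _ (hBc_mem _ (N.mul_mem hn' (N.inv_mem hn)) b hb) _ hb'
      rw [h1, hnbrb']
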